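/- For G ⊆ ℝ[X₁,…,Xₙ], the scalar quadratic module Q_G in ℝ[X̄] is archimedean if and only if the quadratic module M_G generated by G·I in ℝ[X̄]^{t×t} is archimedean. -/

import Mathlib

open Matrix MvPolynomial

/-- Membership in the quadratic module `Q_G` generated by `G` in `ℝ[X̄]`. -/
def InQ (n : ℕ) (G : Set (MvPolynomial (Fin n) ℝ)) (f : MvPolynomial (Fin n) ℝ) : Prop :=
  ∃ (N : ℕ) (g p : Fin N → MvPolynomial (Fin n) ℝ),
    (∀ i, g i = 1 ∨ g i ∈ G) ∧ f = ∑ i, (p i) ^ 2 * g i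

/-- Membership in the quadratic module generated by `G` in `ℝ[X̄]^{t×t}`. -/
def InQM (n t : ℕ) (G : Set (Matrix (Fin t) (Fin t) (MvPolynomial (Fin n) ℝ)))
    (f : Matrix (Fin t) (Fin t) (MvPolynomial (Fin n) ℝ)) : Prop :=
  ∃ (N : ℕ) (g p : Fin N → Matrix (Fin t) (Fin t) (MvPolynomial (Fin n) ℝ)),
    (∀ i, g i = 1 ∨ g i ∈ G) ∧ f = ∑ i, (p i)ᵀ * g i * p i

lemma inQ_of_fintype {n : ℕ} {G : Set (MvPolynomial (Fin n) ℝ)} {f : MvPolynomial (Fin n) ℝ}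
    {ι : Type} [Fintype ι] (g p : ι → MvPolynomial (Fin n) ℝ)
    (hg : ∀ i, g i = 1 ∨ g i ∈ G) (hf : f = ∑ i, (p i) ^ 2 * g i) : InQ n G f := by
  obtain ⟨e⟩ : Nonempty (ι ≃ Fin (Fintype.card ι)) := ⟨Fintype.equivFin ι⟩
  refine ⟨Fintype.card ι, g ∘ e.symm, p ∘ e.symm, fun i => hg _, ?_⟩
  rw [hf]
  exact (Equiv.sum_comp e.symm _).symm

lemma inQM_of_fintype {n t : ℕ} {G : Set (Matrix (Fin t) (Fin t) (MvPolynomial (Fin n) ℝ))}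
    {f : Matrix (Fin t) (Fin t) (MvPolynomial (Fin n) ℝ)}
    {ι : Type} [Fintype ι] (g p : ι → Matrix (Fin t) (Fin t) (MvPolynomial (Fin n) ℝ))
    (hg : ∀ i, g i = 1 ∨ g i ∈ G) (hf : f = ∑ i, (p i)ᵀ * g i * p i) : InQM n t G f := by
  obtain ⟨e⟩ : Nonempty (ι ≃ Fin (Fintype.card ι)) := ⟨Fintype.equivFin ι⟩
  refine ⟨Fintype.card ι, g ∘ e.symm, p ∘ e.symm, fun i => hg _, ?_⟩
  rw [hf]
  exact (Equiv.sum_comp e.symm _).symm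

lemma inQ_sum {n : ℕ} {G : Set (MvPolynomial (Fin n) ℝ)} {ι : Type} [Fintype ι]
    (f : ι → MvPolynomial (Fin n) ℝ) (hf : ∀ i, InQ n G (f i)) : InQ n G (∑ i, f i) := by
  choose N g p hg hrep using hf
  refine inQ_of_fintype (ι := Σ i : ι, Fin (N i)) (fun x => g x.1 x.2) (fun x => p x.1 x.2)
    (fun x => hg x.1 x.2) ?_
  rw [← Finset.univ_sigma_univ, Finset.sum_sigma]
  exact Finset.sum_congr rfl fun i _ => hrep i

lemma inQM_sum {n t : ℕ} {G : Set (Matrix (Fin t) (Fin t) (MvPolynomial (Fin n) ℝ))} {ι : Type}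
    [Fintype ι] (f : ι → Matrix (Fin t) (Fin t) (MvPolynomial (Fin n) ℝ))
    (hf : ∀ i, InQM n t G (f i)) : InQM n t G (∑ i, f i) := by
  choose N g p hg hrep using hf
  refine inQM_of_fintype (ι := Σ i : ι, Fin (N i)) (fun x => g x.1 x.2) (fun x => p x.1 x.2)
    (fun x => hg x.1 x.2) ?_
  rw [← Finset.univ_sigma_univ, Finset.sum_sigma]
  exact Finset.sum_congr rfl fun i _ => hrep i

lemma inQM_add {n t : ℕ} {G : Set (Matrix (Fin t) (Fin t) (MvPolynomial (Fin n) ℝ))}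
    {f₁ f₂ : Matrix (Fin t) (Fin t) (MvPolynomial (Fin n) ℝ)}
    (h1 : InQM n t G f₁) (h2 : InQM n t G f₂) : InQM n t G (f₁ + f₂) := by
  have := inQM_sum (ι := Bool) (fun b => cond b f₁ f₂) (by rintro (b | b) <;> simpa)
  simpa [Fintype.sum_bool] using this

lemma helper {R : Type} [CommRing R] {t : ℕ} (k l : Fin t) (v : Fin t → R) :
    ∑ i : Fin t, ∑ j : Fin t,
      (v i * (if k = j then 1 else 0) - v j * (if k = i then 1 else 0)) *
      (v i * (if l = j then 1 else 0) - v j * (if l = i then 1 else 0))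
    = 2 * ((if k = l then ∑ i : Fin t, v i ^ 2 else 0) - v k * v l) := by
  simp only [mul_sub, sub_mul, mul_ite, ite_mul, mul_zero, zero_mul, mul_one, one_mul,
    Finset.sum_sub_distrib, Finset.sum_ite_eq, Finset.sum_ite_eq', Finset.sum_ite_irrel,
    Finset.sum_const_zero, Finset.mem_univ, if_true]
  by_cases h : k = l <;> simp [h, eq_comm, pow_two] <;>
    first
    | (rw [← Finset.mul_sum]; ring)
    | ring

noncomputable def Qm {n t : ℕ} (a : Matrix (Fin t) (Fin t) (MvPolynomial (Fin n) ℝ))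
    (i0 m i j : Fin t) : Matrix (Fin t) (Fin t) (MvPolynomial (Fin n) ℝ) :=
  Matrix.of fun r k => if r = i0 then
    C (Real.sqrt 2)⁻¹ * (a m i * (if k = j then 1 else 0) - a m j * (if k = i then 1 else 0))
    else 0

lemma key_identity {n t : ℕ} (i0 : Fin t) (a : Matrix (Fin t) (Fin t) (MvPolynomial (Fin n) ℝ)) :
    (∑ m : Fin t, ∑ i : Fin t, ∑ j : Fin t, (Qm a i0 m i j)ᵀ * Qm a i0 m i j)
      = (∑ m : Fin t, ∑ k : Fin t, (a m k) ^ 2) • (1 : Matrix _ _ _) - aᵀ * a := by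
  have hc : (C (Real.sqrt 2)⁻¹ : MvPolynomial (Fin n) ℝ) * C (Real.sqrt 2)⁻¹ = C (1/2) := by
    rw [← C_mul, ← mul_inv]
    norm_num [Real.mul_self_sqrt]
  have h2 : ∀ z : MvPolynomial (Fin n) ℝ, (C (1/2 : ℝ) : MvPolynomial (Fin n) ℝ) * (2 * z) = z := by
    intro z
    rw [← mul_assoc, show ((2 : MvPolynomial (Fin n) ℝ)) = C 2 from (map_ofNat C 2).symm, ← C_mul]
    norm_num
  refine Matrix.ext fun k l => ?_
  have hQ : ∀ m i j : Fin t, ((Qm a i0 m i j)ᵀ * Qm a i0 m i j) k l =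
      (C (Real.sqrt 2)⁻¹ * C (Real.sqrt 2)⁻¹) *
      ((a m i * (if k = j then 1 else 0) - a m j * (if k = i then 1 else 0)) *
       (a m i * (if l = j then 1 else 0) - a m j * (if l = i then 1 else 0))) := by
    intro m i j
    rw [mul_apply]
    rw [Finset.sum_eq_single i0]
    · simp only [transpose_apply, Matrix.of_apply, Qm, if_true]
      ring
    · intro r _ hr
      simp [Qm, transpose_apply, hr]
    · simp
  calc (∑ m : Fin t, ∑ i : Fin t, ∑ j : Fin t, (Qm a i0 m i j)ᵀ * Qm a i0 m i j) k l
      = ∑ m : Fin t, ∑ i : Fin t, ∑ j : Fin t, ((Qm a i0 m i j)ᵀ * Qm a i0 m i j) k l := by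
        simp [Matrix.sum_apply]
    _ = ∑ m : Fin t, (C (Real.sqrt 2)⁻¹ * C (Real.sqrt 2)⁻¹) * ∑ i : Fin t, ∑ j : Fin t,
        (a m i * (if k = j then 1 else 0) - a m j * (if k = i then 1 else 0)) *
        (a m i * (if l = j then 1 else 0) - a m j * (if l = i then 1 else 0)) := by
        refine Finset.sum_congr rfl fun m _ => ?_
        rw [Finset.mul_sum]
        refine Finset.sum_congr rfl fun i _ => ?_
        rw [Finset.mul_sum]
        exact Finset.sum_congr rfl fun j _ => hQ m i j
    _ = ∑ m : Fin t, ((if k = l then ∑ i : Fin t, a m i ^ 2 else 0) - a m k * a m l) := by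
        refine Finset.sum_congr rfl fun m _ => ?_
        rw [hc, helper k l (a m), h2]
    _ = (if k = l then ∑ m : Fin t, ∑ i : Fin t, a m i ^ 2 else 0) - ∑ m : Fin t, a m k * a m l := by
        rw [Finset.sum_sub_distrib, Finset.sum_ite_irrel, Finset.sum_const_zero]
    _ = ((∑ m : Fin t, ∑ k : Fin t, (a m k) ^ 2) • (1 : Matrix (Fin t) (Fin t) (MvPolynomial (Fin n) ℝ)) - aᵀ * a) k l := by
        simp only [Matrix.sub_apply, Matrix.smul_apply, Matrix.one_apply, mul_apply,
          transpose_apply, smul_eq_mul]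
        by_cases h : k = l <;> simp [h]

lemma inQM_smul_one {n t : ℕ} {G : Set (MvPolynomial (Fin n) ℝ)} {f : MvPolynomial (Fin n) ℝ}
    (hf : InQ n G f) :
    InQM n t ((fun g => g • (1 : Matrix (Fin t) (Fin t) (MvPolynomial (Fin n) ℝ))) '' G)
      (f • (1 : Matrix (Fin t) (Fin t) (MvPolynomial (Fin n) ℝ))) := by
  obtain ⟨N, g, p, hg, rfl⟩ := hf
  refine inQM_of_fintype (ι := Fin N) (fun i => g i • 1) (fun i => p i • 1) ?_ ?_
  · intro i
    rcases hg i with h | h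
    · left; rw [h, one_smul]
    · right; exact ⟨g i, h, rfl⟩
  · rw [Finset.sum_smul]
    refine Finset.sum_congr rfl fun i _ => ?_
    ext k l
    simp [Matrix.mul_apply, Matrix.one_apply, Finset.sum_ite_eq, Finset.sum_ite_eq',
      mul_ite, ite_mul, mul_zero, zero_mul]
    by_cases h : k = l <;> simp [h] <;> ring

lemma inQ_trace {n t : ℕ} {G : Set (MvPolynomial (Fin n) ℝ)}
    {f : Matrix (Fin t) (Fin t) (MvPolynomial (Fin n) ℝ)}
    (hf : InQM n t ((fun g => g • (1 : Matrix (Fin t) (Fin t) (MvPolynomial (Fin n) ℝ))) '' G) f) :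
    InQ n G (Matrix.trace f) := by
  obtain ⟨N, g, p, hg, rfl⟩ := hf
  have hc : ∀ i, ∃ c : MvPolynomial (Fin n) ℝ, (c = 1 ∨ c ∈ G) ∧ g i = c • 1 := by
    intro i
    rcases hg i with h | ⟨c, hcG, hce⟩
    · exact ⟨1, Or.inl rfl, by rw [h, one_smul]⟩
    · exact ⟨c, Or.inr hcG, hce.symm⟩
  choose c hcG hgc using hc
  refine inQ_of_fintype (ι := Fin N × Fin t × Fin t) (fun x => c x.1)
    (fun x => p x.1 x.2.1 x.2.2) (fun x => hcG x.1) ?_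
  rw [Matrix.trace_sum]
  simp only [Fintype.sum_prod_type]
  refine Finset.sum_congr rfl fun i _ => ?_
  rw [hgc i]
  have : (p i)ᵀ * (c i • 1) * p i = c i • ((p i)ᵀ * p i) := by
    rw [Matrix.mul_smul, Matrix.smul_mul, mul_one]
  rw [this, Matrix.trace_smul, Matrix.trace]
  simp only [smul_eq_mul, Matrix.diag, Matrix.mul_apply, transpose_apply, Finset.mul_sum]
  rw [Finset.sum_comm]
  refine Finset.sum_congr rfl fun k _ => Finset.sum_congr rfl fun m _ => ?_
  ring

lemma natCast_matrix_eq {n t : ℕ} (N : ℕ) :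
    ((N : ℕ) : Matrix (Fin t) (Fin t) (MvPolynomial (Fin n) ℝ))
      = ((N : MvPolynomial (Fin n) ℝ)) • (1 : Matrix (Fin t) (Fin t) (MvPolynomial (Fin n) ℝ)) := by
  refine Matrix.ext fun k l => ?_
  rw [← Matrix.diagonal_natCast]
  by_cases h : k = l <;>
    simp [Matrix.smul_apply, Matrix.one_apply, h, Matrix.diagonal_apply]

/-- **Proposition 14.** For `G ⊆ ℝ[X̄]` and `t ≥ 1`, the scalar quadratic module `Q_G` is
archimedean if and only if the quadratic module `M_G` generated by `G·I` in `ℝ[X̄]^{t×t}`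
is archimedean. -/
theorem stmt16 (n t : ℕ) (ht : 0 < t) (G : Set (MvPolynomial (Fin n) ℝ)) :
    (∀ p : MvPolynomial (Fin n) ℝ,
        ∃ N : ℕ, InQ n G ((N : MvPolynomial (Fin n) ℝ) - p ^ 2)) ↔
      (∀ a : Matrix (Fin t) (Fin t) (MvPolynomial (Fin n) ℝ),
        ∃ N : ℕ,
          InQM n t ((fun g => g • (1 : Matrix (Fin t) (Fin t) (MvPolynomial (Fin n) ℝ))) '' G)
            ((N : Matrix (Fin t) (Fin t) (MvPolynomial (Fin n) ℝ)) - aᵀ * a)) := by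
  set i0 : Fin t := ⟨0, ht⟩
  constructor
  · intro hQ a
    choose Nf hNf using fun x : Fin t × Fin t => hQ (a x.1 x.2)
    refine ⟨∑ x : Fin t × Fin t, Nf x, ?_⟩
    set s : MvPolynomial (Fin n) ℝ := ∑ m : Fin t, ∑ k : Fin t, (a m k) ^ 2 with hs
    have h1 : InQ n G (((∑ x : Fin t × Fin t, Nf x : ℕ) : MvPolynomial (Fin n) ℝ) - s) := by
      have : ((( ∑ x : Fin t × Fin t, Nf x : ℕ)) : MvPolynomial (Fin n) ℝ) - s
          = ∑ x : Fin t × Fin t, (((Nf x : ℕ) : MvPolynomial (Fin n) ℝ) - (a x.1 x.2) ^ 2) := by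
        rw [Finset.sum_sub_distrib, Nat.cast_sum, hs]
        simp only [Fintype.sum_prod_type]
      rw [this]
      exact inQ_sum _ fun x => hNf x
    have h2 : InQM n t ((fun g => g • (1 : Matrix (Fin t) (Fin t) (MvPolynomial (Fin n) ℝ))) '' G)
        ((((∑ x : Fin t × Fin t, Nf x : ℕ) : MvPolynomial (Fin n) ℝ) - s) • 1) :=
      inQM_smul_one h1
    have h3 : InQM n t ((fun g => g • (1 : Matrix (Fin t) (Fin t) (MvPolynomial (Fin n) ℝ))) '' G)
        (s • 1 - aᵀ * a) := by
      rw [← key_identity i0 a]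
      refine inQM_of_fintype (ι := Fin t × Fin t × Fin t) (fun _ => 1)
        (fun x => Qm a i0 x.1 x.2.1 x.2.2) (fun _ => Or.inl rfl) ?_
      rw [Fintype.sum_prod_type]
      refine Finset.sum_congr rfl fun m _ => ?_
      rw [Fintype.sum_prod_type]
      refine Finset.sum_congr rfl fun i _ => Finset.sum_congr rfl fun j _ => ?_
      rw [mul_one]
    have := inQM_add h2 h3
    have heq : ((((∑ x : Fin t × Fin t, Nf x : ℕ) : MvPolynomial (Fin n) ℝ) - s) • 1)
        + (s • (1 : Matrix (Fin t) (Fin t) (MvPolynomial (Fin n) ℝ)) - aᵀ * a)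
        = ((∑ x : Fin t × Fin t, Nf x : ℕ) : Matrix (Fin t) (Fin t) (MvPolynomial (Fin n) ℝ))
            - aᵀ * a := by
      rw [natCast_matrix_eq]
      rw [sub_smul]
      abel
    rwa [heq] at this
  · intro hM p
    obtain ⟨N, hN⟩ := hM (Matrix.single i0 i0 p)
    refine ⟨t * N, ?_⟩
    have := inQ_trace hN
    have htr : Matrix.trace (((N : ℕ) : Matrix (Fin t) (Fin t) (MvPolynomial (Fin n) ℝ))
        - (Matrix.single i0 i0 p)ᵀ * Matrix.single i0 i0 p)
        = ((t * N : ℕ) : MvPolynomial (Fin n) ℝ) - p ^ 2 := by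
      rw [Matrix.trace_sub]
      congr 1
      · rw [natCast_matrix_eq, Matrix.trace_smul, Matrix.trace_one]
        simp [smul_eq_mul]
        ring
      · rw [Matrix.trace]
        simp only [Matrix.diag, Matrix.mul_apply, transpose_apply, Matrix.single,
          Matrix.of_apply]
        rw [Finset.sum_comm]
        simp [ite_mul, zero_mul, mul_ite, mul_zero, Finset.sum_ite_eq, Finset.sum_ite_eq',
          ite_and, pow_two]
    rwa [htr] at this
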